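/- A tree with nodes N_1, …, N_k (with inputs and outputs as specified) is precisely a bijection α : (⊔_i {x_{i1},…,x_{im_i}}) ⊔ {z} → (⊔_i {x_i}) ⊔ {z_1,…,z_l} (with l = (Σ m_i) − k + 1) such that there is no nonempty sequence of indices t_1, …, t_n as in the closed-loop criterion; equivalently, trees with these nodes correspond bijectively to acyclic such bijections. -/

import Mathlib

variable {k l : ℕ} {m : Fin k → ℕ}

/-- Edges of the graph determined by `α` joining two of the nodes `N_1, …, N_k`. -/
def NodeEdge (α : ((Σ i : Fin k, Fin (m i)) ⊕ Unit) ≃ (Fin k ⊕ Fin l)) : Type :=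
  {p : (Σ i : Fin k, Fin (m i)) × Fin k // α (Sum.inl p.1) = Sum.inl p.2}

/-- The graph determined by `α` contains a closed loop (a cycle among the nodes). -/
def HasClosedLoop (α : ((Σ i : Fin k, Fin (m i)) ⊕ Unit) ≃ (Fin k ⊕ Fin l)) : Prop :=
  ∃ (n : ℕ) (e : Fin (n + 1) → NodeEdge α) (v : Fin (n + 1) → Fin k),
    Function.Injective e ∧ Function.Injective v ∧
      ∀ j, s((e j).1.1.1, (e j).1.2) = s(v j, v (j + 1))

/-- The owner of a domain element. -/
def ownerD : ((Σ i : Fin k, Fin (m i)) ⊕ Unit) → (Fin k ⊕ Unit) :=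
  Sum.elim (fun p => Sum.inl p.1) (fun _ => Sum.inr ())

/-- The owner of a codomain element. -/
def ownerC : (Fin k ⊕ Fin l) → (Fin k ⊕ Unit) :=
  Sum.elim Sum.inl (fun _ => Sum.inr ())

/-- Adjacency in the full graph on `{N_1, …, N_k, N}` determined by `α`. -/
def Adj (α : ((Σ i : Fin k, Fin (m i)) ⊕ Unit) ≃ (Fin k ⊕ Fin l))
    (v w : Fin k ⊕ Unit) : Prop :=
  ∃ y, s(ownerD y, ownerC (α y)) = s(v, w)

/-- Connectedness of the full graph determined by `α`. -/
def Conn (α : ((Σ i : Fin k, Fin (m i)) ⊕ Unit) ≃ (Fin k ⊕ Fin l)) : Prop :=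
  ∀ v w, Relation.ReflTransGen (Adj α) v w

/-- `α` is a tree: the graph it determines is connected and has no closed loop. -/
def IsTree (α : ((Σ i : Fin k, Fin (m i)) ⊕ Unit) ≃ (Fin k ⊕ Fin l)) : Prop :=
  Conn α ∧ ¬ HasClosedLoop α

/-- The closed-loop criterion: a nonempty cyclic sequence of indices `t_1, …, t_n` with
`α (x_{t_j b_j}) = x_{t_{j-1}}`. -/
def SeqCond (α : ((Σ i : Fin k, Fin (m i)) ⊕ Unit) ≃ (Fin k ⊕ Fin l)) : Prop :=
  ∃ (n : ℕ) (t : Fin (n + 1) → Fin k),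
    ∀ j, ∃ b : Fin (m (t j)), α (Sum.inl ⟨t j, b⟩) = Sum.inl (t (j - 1))


namespace TreeAux3

open Fin.NatCast

/-- The `G` map: predecessor node of node `i` (junk value if the input of `i`
comes from the formal node). -/
def G (α : ((Σ i : Fin k, Fin (m i)) ⊕ Unit) ≃ (Fin k ⊕ Fin l)) (i : Fin k) : Fin k :=
  Sum.elim (fun p => p.1) (fun _ => i) (α.symm (Sum.inl i))

/-- node `i`'s input comes from another node. -/
def P (α : ((Σ i : Fin k, Fin (m i)) ⊕ Unit) ≃ (Fin k ⊕ Fin l)) (i : Fin k) : Prop :=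
  ∃ p : (Σ i' : Fin k, Fin (m i')), α.symm (Sum.inl i) = Sum.inl p

/-- `G` has a periodic point with `P` holding along its orbit. -/
def Sq (α : ((Σ i : Fin k, Fin (m i)) ⊕ Unit) ≃ (Fin k ⊕ Fin l)) : Prop :=
  ∃ (i : Fin k) (n : ℕ), (∀ c : ℕ, P α ((G α)^[c] i)) ∧ (G α)^[n+1] i = i

variable {α : ((Σ i : Fin k, Fin (m i)) ⊕ Unit) ≃ (Fin k ⊕ Fin l)}

lemma step_of {i j : Fin k} (h : ∃ b, α (Sum.inl ⟨j, b⟩) = Sum.inl i) :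
    P α i ∧ G α i = j := by
  obtain ⟨b, hb⟩ := h
  have h2 : α.symm (Sum.inl i) = Sum.inl ⟨j, b⟩ := by
    rw [← hb, Equiv.symm_apply_apply]
  exact ⟨⟨_, h2⟩, by simp [G, h2]⟩

lemma step_to {i : Fin k} (hP : P α i) :
    ∃ b, α (Sum.inl ⟨G α i, b⟩) = Sum.inl i := by
  obtain ⟨⟨j, b⟩, h2⟩ := hP
  have hg : G α i = j := by simp [G, h2]
  rw [hg]
  exact ⟨b, by rw [← h2, Equiv.apply_symm_apply]⟩

lemma seq_to_sq (h : SeqCond α) : Sq α := by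
  obtain ⟨n, t, ht⟩ := h
  have key : ∀ j : Fin (n+1), P α (t j) ∧ G α (t j) = t (j + 1) := by
    intro j
    have := step_of (ht (j + 1))
    rwa [add_sub_cancel_right] at this
  have iter : ∀ c : ℕ, (G α)^[c] (t 0) = t (c : Fin (n+1)) := by
    intro c
    induction c with
    | zero => simp
    | succ c ih =>
      rw [Function.iterate_succ_apply', ih, (key _).2]
      congr 1
      push_cast
      ring
  refine ⟨t 0, n, fun c => ?_, ?_⟩
  · rw [iter]; exact (key _).1
  · rw [iter, Fin.natCast_self]

lemma sq_to_seq (h : Sq α) : SeqCond α := by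
  obtain ⟨i, n, hP, hper⟩ := h
  refine ⟨n, fun j => (G α)^[j.val] i, fun j => ?_⟩
  have hstep : (G α) ((G α)^[(j-1).val] i) = (G α)^[j.val] i := by
    rw [← Function.iterate_succ_apply' (G α) (j-1).val i]
    rcases eq_or_ne j 0 with rfl | hj
    · rw [Fin.coe_sub_one]
      simp [hper]
    · rw [Fin.coe_sub_one, if_neg hj]
      have hj' : j.val ≠ 0 := fun h => hj (Fin.ext h)
      congr 1
      omega
  have := step_to (hP (j-1).val)
  rwa [hstep] at this

lemma sq_to_loop (h : Sq α) : HasClosedLoop α := by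
  classical
  obtain ⟨i, n0, hP, hper0⟩ := h
  have hQ : ∃ d, (G α)^[d+1] i = i := ⟨n0, hper0⟩
  set d := Nat.find hQ with hd
  have hper : (G α)^[d+1] i = i := Nat.find_spec hQ
  set v : Fin (d+1) → Fin k := fun j => (G α)^[j.val] i with hv
  have key : ∀ a b : Fin (d+1), a.val < b.val → v a ≠ v b := by
    intro a b hlt hab
    have h1 : (G α)^[d+1-b.val] ((G α)^[b.val] i) = i := by
      rw [← Function.iterate_add_apply]
      have hb : d+1-b.val + b.val = d+1 := by omega
      rw [hb, hper]
    have hab' : (G α)^[a.val] i = (G α)^[b.val] i := hab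
    have h2 : (G α)^[(d+1-b.val) + a.val] i = i := by
      rw [Function.iterate_add_apply, hab']
      exact h1
    have h3 : (d+1-b.val) + a.val ≤ d := by omega
    have h4 : 1 ≤ (d+1-b.val) + a.val := by omega
    have h5 := Nat.find_min hQ (m := (d+1-b.val) + a.val - 1) (by omega)
    apply h5
    have : (d+1-b.val) + a.val - 1 + 1 = (d+1-b.val) + a.val := by omega
    rw [this, h2]
  have hvinj : Function.Injective v := by
    intro a b hab
    rcases lt_trichotomy a.val b.val with h' | h' | h'
    · exact absurd hab (key a b h')
    · exact Fin.ext h'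
    · exact absurd hab.symm (key b a h')
  have hGv : ∀ j : Fin (d+1), G α (v j) = v (j+1) := by
    intro j
    rcases eq_or_ne j (Fin.last d) with rfl | hj
    · rw [Fin.last_add_one]
      show G α ((G α)^[(Fin.last d).val] i) = (G α)^[(0 : Fin (d+1)).val] i
      rw [← Function.iterate_succ_apply' (G α) (Fin.last d).val i]
      simpa using hper
    · show G α ((G α)^[j.val] i) = (G α)^[(j+1).val] i
      rw [← Function.iterate_succ_apply' (G α) j.val i]
      congr 1
      rw [Fin.val_add_one, if_neg hj]
  have hPj : ∀ j : Fin (d+1), P α (v j) := fun j => hP j.val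
  refine ⟨d, fun j => ⟨(⟨G α (v j), (step_to (hPj j)).choose⟩, v j), (step_to (hPj j)).choose_spec⟩,
    v, ?_, hvinj, ?_⟩
  · intro a b hab
    apply hvinj
    exact congrArg (fun x => x.1.2) hab
  · intro j
    show s(G α (v j), v j) = _
    rw [hGv j]
    exact Sym2.eq_swap

lemma loop_to_sq (h : HasClosedLoop α) : Sq α := by
  obtain ⟨n, e, v, he, hv, hs⟩ := h
  set h' : Fin (n+1) → Fin k := fun j => (e j).1.2 with hh'
  set w : Fin (n+1) → Fin k := fun j => (e j).1.1.1 with hww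
  have hstep : ∀ j, P α (h' j) ∧ G α (h' j) = w j := fun j => step_of ⟨(e j).1.1.2, (e j).2⟩
  have hinj : Function.Injective h' := by
    intro a b hab
    apply he
    have ha := (e a).2
    have hb := (e b).2
    have h3 : (Sum.inl (e a).1.1 : (Σ i : Fin k, Fin (m i)) ⊕ Unit) = Sum.inl (e b).1.1 :=
      α.injective (by rw [ha, hb]; exact congrArg Sum.inl hab)
    exact Subtype.ext (Prod.ext (Sum.inl.inj h3) hab)
  have hC : ∀ j, (w j = v j ∧ h' j = v (j+1)) ∨ (w j = v (j+1) ∧ h' j = v j) := by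
    intro j
    have := hs j
    rwa [Sym2.eq_iff] at this
  rcases Nat.eq_zero_or_pos n with rfl | hn
  · -- n = 0 : single loop edge
    have h01 : (0 : Fin 1) + 1 = 0 := rfl
    have hh0 : h' 0 = v 0 := by
      rcases hC 0 with ⟨_, h2⟩ | ⟨_, h2⟩
      · rw [h01] at h2; exact h2
      · exact h2
    have hw0 : w 0 = v 0 := by
      rcases hC 0 with ⟨h1, _⟩ | ⟨h1, _⟩
      · exact h1
      · rw [h01] at h1; exact h1
    have hG0 : G α (v 0) = v 0 := by
      conv_lhs => rw [← hh0]
      rw [(hstep 0).2, hw0]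
    have itr : ∀ c : ℕ, (G α)^[c] (v 0) = v 0 := by
      intro c; induction c with
      | zero => rfl
      | succ c ih => rw [Function.iterate_succ_apply', ih, hG0]
    have Pv : P α (v 0) := by rw [← hh0]; exact (hstep 0).1
    exact ⟨v 0, 0, fun c => by rw [itr]; exact Pv, by rw [itr]⟩
  · have h10 : (1 : Fin (n+1)) ≠ 0 := by
      intro hc
      have := congrArg Fin.val hc
      simp [Fin.val_one, Fin.val_zero] at this
      omega
    have hne1 : ∀ j : Fin (n+1), j + 1 ≠ j := by
      intro j hc
      apply h10
      have : j + 1 = j + 0 := by rw [add_zero]; exact hc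
      exact add_left_cancel this
    have hsub1 : ∀ j : Fin (n+1), j - 1 ≠ j := by
      intro j hc
      have h2 : (j - 1) + 1 = j + 1 := by rw [hc]
      rw [sub_add_cancel] at h2
      exact hne1 j h2.symm
    have up : ∀ j, h' j = v (j+1) → h' (j+1) = v (j+1+1) := by
      intro j hj
      rcases hC (j+1) with ⟨_, h2⟩ | ⟨_, h2⟩
      · exact h2
      · exact absurd (hinj (hj ▸ h2 : h' (j+1) = h' j)) (hne1 j)
    have down : ∀ j, h' j = v j → h' (j-1) = v (j-1) := by
      intro j hj
      rcases hC (j-1) with ⟨_, h2⟩ | ⟨_, h2⟩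
      · rw [sub_add_cancel] at h2
        exact absurd (hinj (hj ▸ h2 : h' (j-1) = h' j)) (hsub1 j)
      · exact h2
    rcases hC 0 with ⟨_, h0⟩ | ⟨_, h0⟩
    · -- all h' j = v (j+1)
      have allc : ∀ c : ℕ, h' (c : Fin (n+1)) = v ((c : Fin (n+1))+1) := by
        intro c; induction c with
        | zero => simpa using h0
        | succ c ih =>
          have := up _ ih
          have hc : ((c+1 : ℕ) : Fin (n+1)) = (c : Fin (n+1)) + 1 := by push_cast; ring
          rw [hc]; exact this
      have allj : ∀ j, h' j = v (j+1) := by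
        intro j
        have := allc j.val
        rwa [Fin.cast_val_eq_self] at this
      have hwj : ∀ j, w j = v j := by
        intro j
        rcases hC j with ⟨h1, _⟩ | ⟨_, h2⟩
        · exact h1
        · exact absurd (hv ((allj j).symm.trans h2).symm) (Ne.symm (hne1 j))
      have Gback : ∀ j, G α (v j) = v (j - 1) := by
        intro j
        have h1 := (hstep (j-1)).2
        rw [allj (j-1), sub_add_cancel, hwj (j-1)] at h1
        exact h1
      have Pall : ∀ j, P α (v j) := by
        intro j
        have := (hstep (j-1)).1
        rwa [allj (j-1), sub_add_cancel] at this
      have itr : ∀ c : ℕ, (G α)^[c] (v 0) = v (-(c : Fin (n+1))) := by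
        intro c; induction c with
        | zero => simp
        | succ c ih =>
          rw [Function.iterate_succ_apply', ih, Gback]
          congr 1
          push_cast
          abel
      refine ⟨v 0, n, fun c => by rw [itr]; exact Pall _, ?_⟩
      rw [itr, Fin.natCast_self, neg_zero]
    · -- all h' j = v j
      have allc : ∀ c : ℕ, h' (-(c : Fin (n+1))) = v (-(c : Fin (n+1))) := by
        intro c; induction c with
        | zero => simpa using h0
        | succ c ih =>
          have := down _ ih
          have hc : (-((c+1 : ℕ) : Fin (n+1))) = -(c : Fin (n+1)) - 1 := by push_cast; abel
          rw [hc]; exact this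
      have allj : ∀ j, h' j = v j := by
        intro j
        have := allc (-j).val
        rwa [Fin.cast_val_eq_self, neg_neg] at this
      have hwj : ∀ j, w j = v (j+1) := by
        intro j
        rcases hC j with ⟨_, h2⟩ | ⟨h1, _⟩
        · exact absurd (hv ((allj j).symm.trans h2)) (Ne.symm (hne1 j))
        · exact h1
      have Gfwd : ∀ j, G α (v j) = v (j + 1) := by
        intro j
        have h1 := (hstep j).2
        rw [allj j, hwj j] at h1
        exact h1
      have Pall : ∀ j, P α (v j) := by
        intro j
        have := (hstep j).1
        rwa [allj j] at this
      have itr : ∀ c : ℕ, (G α)^[c] (v 0) = v ((c : Fin (n+1))) := by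
        intro c; induction c with
        | zero => simp
        | succ c ih =>
          rw [Function.iterate_succ_apply', ih, Gfwd]
          congr 1
          push_cast
          ring
      refine ⟨v 0, n, fun c => by rw [itr]; exact Pall _, ?_⟩
      rw [itr, Fin.natCast_self]

lemma not_P {i : Fin k} (h : ¬ P α i) : α.symm (Sum.inl i) = Sum.inr () := by
  rcases hs : α.symm (Sum.inl i) with p | u
  · exact absurd ⟨p, hs⟩ h
  · cases u; rfl

lemma adj_symm : Symmetric (Adj α) := by
  rintro v w ⟨y, hy⟩
  exact ⟨y, hy.trans Sym2.eq_swap⟩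

lemma adj_of_P {i : Fin k} (hP : P α i) : Adj α (Sum.inl i) (Sum.inl (G α i)) := by
  obtain ⟨b, hb⟩ := step_to hP
  refine adj_symm ⟨Sum.inl ⟨G α i, b⟩, ?_⟩
  rw [hb]
  rfl

lemma reach (c : ℕ) : ∀ i : Fin k, (∀ c' < c, P α ((G α)^[c'] i)) →
    Relation.ReflTransGen (Adj α) (Sum.inl i) (Sum.inl ((G α)^[c] i)) := by
  induction c with
  | zero => intro i _; exact .refl
  | succ c ih =>
    intro i hp
    have hPi : P α i := by simpa using hp 0 (Nat.succ_pos c)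
    have h1 := ih (G α i) (fun c' hc' => by
      rw [← Function.iterate_succ_apply (G α) c' i]
      exact hp (c'+1) (by omega))
    refine Relation.ReflTransGen.head (adj_of_P hPi) ?_
    rw [Function.iterate_succ_apply (G α) c i]
    exact h1

lemma noP (hns : ¬ Sq α) (i : Fin k) : ∃ c, ¬ P α ((G α)^[c] i) := by
  by_contra hc
  push_neg at hc
  apply hns
  have main : ∀ a b : ℕ, a < b → (G α)^[a] i = (G α)^[b] i → Sq α := by
    intro a b hlt he2
    refine ⟨(G α)^[a] i, b - a - 1, fun c => ?_, ?_⟩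
    · rw [← Function.iterate_add_apply]; exact hc _
    · rw [← Function.iterate_add_apply]
      have hb : b - a - 1 + 1 + a = b := by omega
      rw [hb]
      exact he2.symm
  have card : Fintype.card (Fin k) < Fintype.card (Fin (k+1)) := by simp
  obtain ⟨a, b, hab, heq⟩ :=
    Fintype.exists_ne_map_eq_of_card_lt (fun c : Fin (k+1) => (G α)^[c.val] i) card
  rcases lt_trichotomy a.val b.val with hlt | h' | hlt
  · exact main _ _ hlt heq
  · exact absurd (Fin.ext h') hab
  · exact main _ _ hlt heq.symm

lemma conn_of_not_sq (hns : ¬ Sq α) : Conn α := by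
  classical
  rcases Nat.eq_zero_or_pos k with hk | hk
  · subst hk
    rintro (i | u) (i' | u')
    · exact i.elim0
    · exact i.elim0
    · exact i'.elim0
    · cases u; cases u'; exact .refl
  · have root : ∀ i : Fin k, ∃ r, ¬ P α r ∧
        Relation.ReflTransGen (Adj α) (Sum.inl i) (Sum.inl r) := by
      intro i
      have hex := noP hns i
      exact ⟨(G α)^[Nat.find hex] i, Nat.find_spec hex,
        reach _ i (fun c' hc' => not_not.mp (Nat.find_min hex hc'))⟩
    have uniq : ∀ r r' : Fin k, ¬ P α r → ¬ P α r' → r = r' := by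
      intro r r' h1 h2
      exact Sum.inl.inj (α.symm.injective ((not_P h1).trans (not_P h2).symm))
    have adjN : ∀ r : Fin k, ¬ P α r → Adj α (Sum.inr ()) (Sum.inl r) := by
      intro r h1
      refine ⟨Sum.inr (), ?_⟩
      have h2 : α (Sum.inr ()) = Sum.inl r := by
        rw [← not_P h1, Equiv.apply_symm_apply]
      rw [h2]
      rfl
    obtain ⟨r0, hr0, hreach0⟩ := root ⟨0, hk⟩
    have toRoot : ∀ x, Relation.ReflTransGen (Adj α) x (Sum.inl r0) := by
      rintro (i | u)
      · obtain ⟨r, hr, hre⟩ := root i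
        rwa [uniq r r0 hr hr0] at hre
      · cases u
        exact Relation.ReflTransGen.single (adjN r0 hr0)
    intro x y
    haveI : Std.Symm (Adj α) := ⟨fun _ _ h => adj_symm h⟩
    exact (toRoot x).trans (Std.Symm.symm _ _ (toRoot y))

end TreeAux3

/-- A tree with nodes `N_1, …, N_k` is precisely a bijection `α` with no
sequence of indices as in the closed-loop criterion: `α` defines a tree if and only if no
such sequence exists, so trees correspond bijectively to acyclic such bijections. -/
theorem tree_iff_no_seqCond (hl : l + k = (∑ i, m i) + 1)
    (α : ((Σ i : Fin k, Fin (m i)) ⊕ Unit) ≃ (Fin k ⊕ Fin l)) :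
    IsTree α ↔ ¬ SeqCond α := by
  constructor
  · rintro ⟨-, hnl⟩ hseq
    exact hnl (TreeAux3.sq_to_loop (TreeAux3.seq_to_sq hseq))
  · intro hns
    have hnsq : ¬ TreeAux3.Sq α := fun h => hns (TreeAux3.sq_to_seq h)
    exact ⟨TreeAux3.conn_of_not_sq hnsq, fun h => hnsq (TreeAux3.loop_to_sq h)⟩
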